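/- Let G be an isometric daisy graph of a Hamming graph H = H_{k_1,…,k_n} with respect to 0^n, where H is the smallest possible such Hamming graph. Then every △-class of edges of G contains an edge having 0^n as an endpoint. -/

import Mathlib

open Finset


open SimpleGraph

namespace Daisy

variable {V : Type*}

/-- The interval `I_G(u,v)`: vertices lying on shortest `u,v`-paths. -/
def interval (G : SimpleGraph V) (u v : V) : Set V :=
  {x | G.dist u x + G.dist x v = G.dist u v}

/-- The vertex set of the daisy graph of `G` with respect to the root `r`, generated by `X`. -/
def daisySet (G : SimpleGraph V) (r : V) (X : Set V) : Set V :=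
  ⋃ v ∈ X, interval G r v

/-- The subgraph of `G` induced by `S` is an isometric subgraph of `G`. -/
def IsIsometricSubset (G : SimpleGraph V) (S : Set V) : Prop :=
  ∀ u v : S, (G.induce S).dist u v = G.dist u.1 v.1

/-- Some shortest `u,v`-path of `G` contains both `x` and `y`. -/
def OnShortestPath (G : SimpleGraph V) (u v x y : V) : Prop :=
  ∃ p : G.Walk u v, p.length = G.dist u v ∧ x ∈ p.support ∧ y ∈ p.support

/-- Conditions 1 and 2 of the definition of a pseudo-median `(x,y,z)` of the triple `(u,v,w)`. -/
def PseudoMedianConds (G : SimpleGraph V) (u v w x y z : V) : Prop :=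
  OnShortestPath G u v x y ∧ OnShortestPath G v w y z ∧ OnShortestPath G u w x z ∧
  G.dist x y = G.dist y z ∧ G.dist y z = G.dist x z

/-- `(x,y,z)` is a pseudo-median of the triple `(u,v,w)` in `G`:
it satisfies the path and equidistance conditions, and `d(x,y)` is minimal under them. -/
def IsPseudoMedian (G : SimpleGraph V) (u v w x y z : V) : Prop :=
  PseudoMedianConds G u v w x y z ∧
  ∀ x' y' z' : V, PseudoMedianConds G u v w x' y' z' → G.dist x y ≤ G.dist x' y'

/-- The triple `(u,v,w)` has a pseudo-median of size `s` in `G`. -/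
def HasPseudoMedianOfSize (G : SimpleGraph V) (u v w : V) (s : ℕ) : Prop :=
  ∃ x y z : V, IsPseudoMedian G u v w x y z ∧ G.dist x y = s

/-- The Hamming graph with factors `K_{k i}`: vertices are tuples, two vertices being
adjacent iff they differ in exactly one coordinate. -/
def hammingGraph {ι : Type*} (k : ι → ℕ) : SimpleGraph (∀ i, Fin (k i)) where
  Adj u v := ∃! i, u i ≠ v i
  symm := by
    constructor
    rintro u v ⟨i, hi, hu⟩
    exact ⟨i, Ne.symm hi, fun j hj => hu j (Ne.symm hj)⟩
  loopless := by
    constructor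
    rintro u ⟨i, hi, -⟩
    exact hi rfl

/-- The all-zeros vertex `0^n` of a Hamming graph. -/
def hroot {ι : Type*} (k : ι → ℕ) (hk : ∀ i, 0 < k i) : ∀ i, Fin (k i) :=
  fun i => ⟨0, hk i⟩

/-- `S` is the vertex set of a daisy graph of `G` with respect to the root `r`. -/
def IsDaisySet (G : SimpleGraph V) (r : V) (S : Set V) : Prop :=
  ∃ X : Set V, S = daisySet G r X

/-- `G` is (isomorphic to) an isometric daisy graph of `H` with respect to the root `r`. -/
def IsIsometricDaisyGraphOf {U : Type*} (G : SimpleGraph U) (H : SimpleGraph V) (r : V) : Prop :=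
  ∃ S : Set V, IsDaisySet H r S ∧ IsIsometricSubset H S ∧ Nonempty (G ≃g H.induce S)

/-- `G` is not an isometric daisy graph (w.r.t. the all-zeros root) of any Hamming graph
with fewer vertices than `hammingGraph k`. -/
def SmallestSuch {U : Type*} (G : SimpleGraph U) {n : ℕ} (k : Fin n → ℕ) : Prop :=
  ∀ (m : ℕ) (k' : Fin m → ℕ) (hk' : ∀ i, 0 < k' i),
    Fintype.card (∀ i, Fin (k' i)) < Fintype.card (∀ i, Fin (k i)) →
    ¬ IsIsometricDaisyGraphOf G (hammingGraph k') (hroot k' hk')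

/-- The Djoković relation `~` on (ordered) edges: `(u,v) ~ (x,y)` iff both are edges,
`x ∈ W_{uv} = {z | d(u,z) < d(v,z)}` and `y ∈ W_{vu}`. -/
def sim (G : SimpleGraph V) (p q : V × V) : Prop :=
  G.Adj p.1 p.2 ∧ G.Adj q.1 q.2 ∧
  G.dist p.1 q.1 < G.dist p.2 q.1 ∧ G.dist p.2 q.2 < G.dist p.1 q.2

/-- Brešar's relation `△` on edges: `uv △ xy` iff `uv ~ xy` or there is a clique containing
edges `e`, `f` with `xy ~ e` and `uv ~ f`. -/
def tri (G : SimpleGraph V) (p q : V × V) : Prop :=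
  sim G p q ∨ ∃ (T : Set V) (e f : V × V),
    G.IsClique T ∧ e.1 ∈ T ∧ e.2 ∈ T ∧ f.1 ∈ T ∧ f.2 ∈ T ∧ sim G q e ∧ sim G p f

/-- The `△`-class of the edge `p`: the class of `p` under the equivalence relation
generated by `△` (in partial Hamming graphs `△` is itself an equivalence relation). -/
def triClass (G : SimpleGraph V) (p : V × V) : Set (V × V) :=
  {q | Relation.EqvGen (tri G) p q}


section MainAux

set_option linter.unusedSectionVars false

variable {ι : Type*} [Fintype ι] [DecidableEq ι] {k : ι → ℕ}

lemma adj_of_aux {x y : ∀ i, Fin (k i)} {i : ι} (h0 : ∀ j, j ≠ i → x j = y j)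
    (h1 : x i ≠ y i) : (hammingGraph k).Adj x y :=
  ⟨i, h1, fun j hj => by by_contra hne; exact hj (h0 j hne)⟩

lemma hd_adj {u v : ∀ i, Fin (k i)} (h : (hammingGraph k).Adj u v) :
    hammingDist u v = 1 := by
  obtain ⟨i, hi, hu⟩ := h
  rw [hammingDist, Finset.card_eq_one]
  refine ⟨i, ?_⟩
  ext j
  simp only [Finset.mem_filter, Finset.mem_univ, true_and, Finset.mem_singleton]
  exact ⟨fun hj => hu j hj, fun hj => hj ▸ hi⟩

lemma hd_le_length {u v : ∀ i, Fin (k i)} (p : (hammingGraph k).Walk u v) :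
    hammingDist u v ≤ p.length := by
  induction p with
  | nil => simp
  | @cons a b c h p ih =>
    calc hammingDist a c ≤ hammingDist a b + hammingDist b c := hammingDist_triangle _ _ _
    _ ≤ 1 + p.length := by rw [hd_adj h]; omega
    _ = (SimpleGraph.Walk.cons h p).length := by simp [SimpleGraph.Walk.length_cons]; omega

lemma exists_walk (u v : ∀ i, Fin (k i)) :
    ∃ p : (hammingGraph k).Walk u v, p.length = hammingDist u v := by
  suffices h : ∀ (m : ℕ) (u : ∀ i, Fin (k i)), hammingDist u v = m →
      ∃ p : (hammingGraph k).Walk u v, p.length = hammingDist u v by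
    exact h _ u rfl
  intro m
  induction m with
  | zero =>
    intro u hm
    rw [hammingDist_eq_zero] at hm; subst hm; exact ⟨SimpleGraph.Walk.nil, by simp⟩
  | succ m ih =>
    intro u hm
    have hne : u ≠ v := by intro h; subst h; simp at hm
    have : ∃ i, u i ≠ v i := by
      by_contra h
      push_neg at h
      exact hne (funext h)
    obtain ⟨i, hi⟩ := this
    set u' := Function.update u i (v i) with hu'
    have hadj : (hammingGraph k).Adj u u' := by
      refine adj_of_aux (i := i) (fun j hj => ?_) ?_
      · rw [hu', Function.update_of_ne hj]
      · rw [hu', Function.update_self]; exact hi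
    have hcard : hammingDist u' v = m := by
      have hfil : ({j | u' j ≠ v j} : Finset ι) = ({j | u j ≠ v j} : Finset ι).erase i := by
        ext j
        by_cases hj : j = i
        · subst hj; simp [hu', Function.update_self]
        · simp [hu', Function.update_of_ne hj, hj, Finset.mem_erase]
      have hmem : i ∈ ({j | u j ≠ v j} : Finset ι) := by simp [hi]
      have : hammingDist u' v = hammingDist u v - 1 := by
        rw [hammingDist, hammingDist, hfil, Finset.card_erase_of_mem hmem]
      omega
    obtain ⟨p, hp⟩ := ih u' hcard
    exact ⟨SimpleGraph.Walk.cons hadj p, by simp [hp, hcard, hm]⟩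

lemma hdist (u v : ∀ i, Fin (k i)) : (hammingGraph k).dist u v = hammingDist u v := by
  obtain ⟨p, hp⟩ := exists_walk u v
  refine le_antisymm (hp ▸ SimpleGraph.dist_le p) ?_
  have hr : (hammingGraph k).Reachable u v := ⟨p⟩
  obtain ⟨q, hq⟩ := hr.exists_walk_length_eq_dist
  exact hq ▸ hd_le_length q

lemma hd_sum (x y : ∀ i, Fin (k i)) :
    hammingDist x y = ∑ j, if x j ≠ y j then 1 else 0 := by
  rw [hammingDist, Finset.card_filter]

lemma hd_lt {i : ι} {x x' y : ∀ i, Fin (k i)} (hagree : ∀ j, j ≠ i → x j = x' j)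
    (h1 : x i = y i) (h2 : x' i ≠ y i) : hammingDist x y < hammingDist x' y := by
  have hfil : ({j | x' j ≠ y j} : Finset ι) = insert i ({j | x j ≠ y j} : Finset ι) := by
    ext j
    by_cases hj : j = i
    · subst hj; simp [h1, h2]
    · simp [hj, hagree j hj]
  have hmem : i ∉ ({j | x j ≠ y j} : Finset ι) := by simp [h1]
  rw [hammingDist, hammingDist, hfil, Finset.card_insert_of_notMem hmem]
  omega

lemma interval_mono (r w x y : ∀ i, Fin (k i))
    (hx : x ∈ interval (hammingGraph k) r w)
    (hy : ∀ j, y j = x j ∨ y j = r j) : y ∈ interval (hammingGraph k) r w := by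
  simp only [interval, Set.mem_setOf_eq, hdist, hd_sum, ← Finset.sum_add_distrib] at hx ⊢
  have hle : ∀ j ∈ Finset.univ, (if r j ≠ w j then 1 else 0) ≤
      ((if r j ≠ x j then 1 else 0) + (if x j ≠ w j then 1 else 0) : ℕ) := by
    intro j _
    by_cases h : r j ≠ w j
    · simp only [if_pos h]
      by_cases h1 : r j = x j
      · have h2 : x j ≠ w j := h1 ▸ h
        simp [h2]
      · simp [h1]
    · simp [h]
  have key := (Finset.sum_eq_sum_iff_of_le hle).mp hx.symm
  have : ∀ j ∈ Finset.univ, ((if r j ≠ y j then 1 else 0) + (if y j ≠ w j then 1 else 0) : ℕ)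
      = if r j ≠ w j then 1 else 0 := by
    intro j hj
    rcases hy j with h | h
    · rw [h]; exact (key j hj).symm
    · rw [h]; simp
  rw [Finset.sum_congr rfl this]

lemma sim_coord {S : Set (∀ i, Fin (k i))}
    (hisom : IsIsometricSubset (hammingGraph k) S) (i : ι) (p q : S × S)
    (hp0 : ∀ j, j ≠ i → (p.1 : ∀ i, Fin (k i)) j = (p.2 : ∀ i, Fin (k i)) j)
    (hp1 : (p.1 : ∀ i, Fin (k i)) i ≠ (p.2 : ∀ i, Fin (k i)) i)
    (hq0 : ∀ j, j ≠ i → (q.1 : ∀ i, Fin (k i)) j = (q.2 : ∀ i, Fin (k i)) j)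
    (hq1 : (q.1 : ∀ i, Fin (k i)) i ≠ (q.2 : ∀ i, Fin (k i)) i)
    (h11 : (p.1 : ∀ i, Fin (k i)) i = (q.1 : ∀ i, Fin (k i)) i)
    (h22 : (p.2 : ∀ i, Fin (k i)) i = (q.2 : ∀ i, Fin (k i)) i) :
    sim ((hammingGraph k).induce S) p q := by
  have distS : ∀ a b : S, ((hammingGraph k).induce S).dist a b = hammingDist a.1 b.1 :=
    fun a b => (hisom a b).trans (hdist _ _)
  refine ⟨adj_of_aux (i := i) hp0 hp1, adj_of_aux (i := i) hq0 hq1, ?_, ?_⟩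
  · rw [distS, distS]
    exact hd_lt hp0 h11 (h22 ▸ Ne.symm hq1)
  · rw [distS, distS]
    exact hd_lt (fun j hj => (hp0 j hj).symm) h22 (h11 ▸ hq1)

end MainAux

/-- Let `G` (with vertex set `S`) be an isometric daisy graph of a Hamming
graph w.r.t. `0^n`, smallest possible. Then every `△`-class of edges of `G` contains an edge
having `0^n` as an endpoint. -/
theorem triClass_has_edge_at_root
    (n : ℕ) (k : Fin n → ℕ) (hk : ∀ i, 0 < k i)
    (S : Set (∀ i, Fin (k i)))
    (hdaisy : IsDaisySet (hammingGraph k) (hroot k hk) S)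
    (hisom : IsIsometricSubset (hammingGraph k) S)
    (hmin : SmallestSuch ((hammingGraph k).induce S) k)
    (p : S × S) (hp : ((hammingGraph k).induce S).Adj p.1 p.2) :
    ∃ q : S × S, q ∈ triClass ((hammingGraph k).induce S) p ∧
      ((q.1 : ∀ i, Fin (k i)) = hroot k hk ∨ (q.2 : ∀ i, Fin (k i)) = hroot k hk) := by
  classical
  obtain ⟨X, hSX⟩ := hdaisy
  set r : ∀ i, Fin (k i) := hroot k hk with hr
  have hclos : ∀ x ∈ S, ∀ y : ∀ i, Fin (k i), (∀ j, y j = x j ∨ y j = r j) → y ∈ S := by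
    intro x hx y hy
    rw [hSX] at hx ⊢
    simp only [daisySet, Set.mem_iUnion] at hx ⊢
    obtain ⟨w, hw, hxw⟩ := hx
    exact ⟨w, hw, interval_mono r w x y hxw hy⟩
  obtain ⟨i, hi, hiu⟩ := hp
  have hp0 : ∀ j, j ≠ i → (p.1 : ∀ i', Fin (k i')) j = (p.2 : ∀ i', Fin (k i')) j := by
    intro j hj; by_contra hne; exact hj (hiu j hne)
  have hrS : r ∈ S := hclos p.1.1 p.1.2 r (fun j => Or.inr rfl)
  by_cases hai : (p.1 : ∀ i', Fin (k i')) i = r i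
  · -- u starts at the root value; take the root edge (r, rb)
    set rb := Function.update r i ((p.2 : ∀ i', Fin (k i')) i) with hrb
    have hrbS : rb ∈ S := by
      refine hclos p.2.1 p.2.2 rb (fun j => ?_)
      by_cases hj : j = i
      · subst hj; left; rw [hrb, Function.update_self]
      · right; rw [hrb, Function.update_of_ne hj]
    refine ⟨(⟨r, hrS⟩, ⟨rb, hrbS⟩), Relation.EqvGen.rel _ _ (Or.inl ?_), Or.inl rfl⟩
    refine sim_coord hisom i p _ hp0 hi ?_ ?_ hai ?_
    · intro j hj
      show r j = rb j
      rw [hrb, Function.update_of_ne hj]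
    · show r i ≠ rb i
      rw [hrb, Function.update_self]
      exact hai ▸ hi
    · show (p.2 : ∀ i', Fin (k i')) i = rb i
      rw [hrb, Function.update_self]
  · set ra := Function.update r i ((p.1 : ∀ i', Fin (k i')) i) with hra
    have hraS : ra ∈ S := by
      refine hclos p.1.1 p.1.2 ra (fun j => ?_)
      by_cases hj : j = i
      · subst hj; left; rw [hra, Function.update_self]
      · right; rw [hra, Function.update_of_ne hj]
    have hra0 : ∀ j, j ≠ i → ra j = r j := fun j hj => by rw [hra, Function.update_of_ne hj]
    have hrai : ra i = (p.1 : ∀ i', Fin (k i')) i := by rw [hra, Function.update_self]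
    have hra1 : ra i ≠ r i := hrai ▸ hai
    refine ⟨(⟨ra, hraS⟩, ⟨r, hrS⟩), Relation.EqvGen.rel _ _ ?_, Or.inr rfl⟩
    by_cases hbi : (p.2 : ∀ i', Fin (k i')) i = r i
    · -- v ends at the root value; direct sim
      exact Or.inl (sim_coord hisom i p _ hp0 hi hra0 hra1 hrai.symm hbi)
    · -- generic case: use the triangle {u, v, z} where z zeroes out coordinate i of u
      set z := Function.update (p.1 : ∀ i', Fin (k i')) i (r i) with hz
      have hzS : z ∈ S := by
        refine hclos p.1.1 p.1.2 z (fun j => ?_)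
        by_cases hj : j = i
        · subst hj; right; rw [hz, Function.update_self]
        · left; rw [hz, Function.update_of_ne hj]
      have hz0 : ∀ j, j ≠ i → (p.1 : ∀ i', Fin (k i')) j = z j :=
        fun j hj => by rw [hz, Function.update_of_ne hj]
      have hzi : z i = r i := by rw [hz, Function.update_self]
      have hz1 : (p.1 : ∀ i', Fin (k i')) i ≠ z i := hzi ▸ hai
      have a1 : ((hammingGraph k).induce S).Adj p.1 p.2 := adj_of_aux (i := i) hp0 hi
      have a2 : ((hammingGraph k).induce S).Adj p.1 ⟨z, hzS⟩ := adj_of_aux (i := i) hz0 hz1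
      have a3 : ((hammingGraph k).induce S).Adj p.2 ⟨z, hzS⟩ := by
        refine adj_of_aux (i := i) (fun j hj => ?_) ?_
        · exact (hp0 j hj).symm.trans (hz0 j hj)
        · show (p.2 : ∀ i', Fin (k i')) i ≠ z i
          rw [hzi]; exact hbi
      refine Or.inr ⟨{p.1, p.2, ⟨z, hzS⟩}, (p.1, ⟨z, hzS⟩), p, ?_, ?_, ?_, ?_, ?_, ?_, ?_⟩
      · intro x hx y hy hxy
        simp only [Set.mem_insert_iff, Set.mem_singleton_iff] at hx hy
        rcases hx with hx | hx | hx <;> rcases hy with hy | hy | hy <;> subst hx <;> subst hy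
        · exact absurd rfl hxy
        · exact a1
        · exact a2
        · exact a1.symm
        · exact absurd rfl hxy
        · exact a3
        · exact a2.symm
        · exact a3.symm
        · exact absurd rfl hxy
      · simp
      · simp
      · simp
      · simp
      · exact sim_coord hisom i _ _ hra0 hra1 hz0 hz1 hrai hzi.symm
      · exact sim_coord hisom i p p hp0 hi hp0 hi rfl rfl


end Daisy
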